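/- Let (X,d,m) be a metric measure space satisfying a measure contraction-type property: for any x₀ ∈ X and measurable A ⊆ X with m(A) > 0 there is a dynamical optimal plan Π from δ_{x₀} to m|_A / m(A) with (e_t)_* Π ≤ (C / t^N) · m / m(A) for all t ∈ (0,1]. Suppose Y ⊆ X is closed with m(Y^ε) ≤ A ε² for all small ε > 0 (Y^ε the ε-neighborhood). Then for every x₀ ∈ X \ Y, the set of endpoints y such that every geodesic from x₀ to y meets Y has m-measure zero; that is, X \ Y is m-almost everywhere convex. -/

import Mathlib

open MeasureTheory Set

set_option maxHeartbeats 2000000 in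
/-- on a compact geodesic metric measure space `(X,d,m)` (with `m` a
probability measure) satisfying the measure-contraction-type property — for any `x₀`
and any measurable `A` of positive measure there is a dynamical plan `Π` on the space
of constant-speed geodesics from `δ_{x₀}` to `m|_A / m(A)` with
`(e_t)_* Pl ≤ (C / t^N) · m / m(A)` for `t ∈ (0,1]` — if `Y` is closed with
`m(Y^ε) ≤ A' ε²` for all small `ε`, then for every `x₀ ∉ Y` the set of endpoints `y`
such that every constant-speed geodesic from `x₀` to `y` meets `Y` is `m`-null; i.e.
`X \ Y` is `m`-almost everywhere convex. -/
theorem mcp_almost_everywhere_convex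
    {X : Type*} [MetricSpace X] [CompactSpace X] [MeasurableSpace X] [BorelSpace X]
    (m : Measure X) [IsProbabilityMeasure m]
    (hgeo : ∀ x y : X, ∃ γ : ℝ → X,
      (∀ s ∈ Icc (0:ℝ) 1, ∀ t ∈ Icc (0:ℝ) 1,
        dist (γ s) (γ t) = |s - t| * dist (γ 0) (γ 1)) ∧ γ 0 = x ∧ γ 1 = y)
    (C N : ℝ) (hC : 0 < C) (hN : 1 ≤ N)
    (hMCP : ∀ (x₀ : X) (A : Set X), MeasurableSet A → 0 < m A →
      ∃ Pl : Measure {γ : ℝ → X // ∀ s ∈ Icc (0:ℝ) 1, ∀ t ∈ Icc (0:ℝ) 1,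
          dist (γ s) (γ t) = |s - t| * dist (γ 0) (γ 1)},
        IsProbabilityMeasure Pl ∧
        Measure.map (fun γ => γ.1 0) Pl = Measure.dirac x₀ ∧
        Measure.map (fun γ => γ.1 1) Pl = (m A)⁻¹ • m.restrict A ∧
        ∀ t ∈ Ioc (0:ℝ) 1,
          Measure.map (fun γ => γ.1 t) Pl ≤ (ENNReal.ofReal (C / t ^ N) * (m A)⁻¹) • m)
    (Y : Set X) (hY : IsClosed Y)
    (A' : ℝ)
    (hthick : ∃ ε₀ > (0:ℝ), ∀ ε : ℝ, 0 < ε → ε < ε₀ →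
      m (Metric.thickening ε Y) ≤ ENNReal.ofReal (A' * ε ^ 2)) :
    ∀ x₀ ∉ Y,
      m {y : X | ∀ γ : ℝ → X,
        (∀ s ∈ Icc (0:ℝ) 1, ∀ t ∈ Icc (0:ℝ) 1,
          dist (γ s) (γ t) = |s - t| * dist (γ 0) (γ 1)) →
        γ 0 = x₀ → γ 1 = y → ∃ t ∈ Icc (0:ℝ) 1, γ t ∈ Y} = 0 := by
  classical
  obtain ⟨ε₀, hε₀, hthick⟩ := hthick
  intro x₀ hx₀
  set B : Set X := {y : X | ∀ γ : ℝ → X,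
      (∀ s ∈ Icc (0:ℝ) 1, ∀ t ∈ Icc (0:ℝ) 1,
        dist (γ s) (γ t) = |s - t| * dist (γ 0) (γ 1)) →
      γ 0 = x₀ → γ 1 = y → ∃ t ∈ Icc (0:ℝ) 1, γ t ∈ Y} with hBdef
  rcases Y.eq_empty_or_nonempty with hYe | hYne
  · -- trivial case: Y empty, so B is empty
    have hBempty : B = ∅ := by
      ext y
      simp only [hBdef, mem_setOf_eq, mem_empty_iff_false, iff_false, not_forall]
      obtain ⟨γ, hγ, h0, h1⟩ := hgeo x₀ y
      refine ⟨γ, hγ, h0, h1, ?_⟩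
      simp [hYe]
    rw [hBempty]; simp
  -- Y nonempty from now on
  obtain ⟨y₀, hy₀⟩ := hYne
  have hYne : Y.Nonempty := ⟨y₀, hy₀⟩
  -- the closed sets of geodesics staying η-away from Y
  set S : ℝ → Set (ℝ → X) := fun η => {γ : ℝ → X |
      (∀ s ∈ Icc (0:ℝ) 1, ∀ t ∈ Icc (0:ℝ) 1,
        dist (γ s) (γ t) = |s - t| * dist (γ 0) (γ 1)) ∧ γ 0 = x₀ ∧
      ∀ t ∈ Icc (0:ℝ) 1, η ≤ Metric.infDist (γ t) Y} with hSdef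
  have hSclosed : ∀ η : ℝ, IsClosed (S η) := by
    intro η
    have h1 : IsClosed {γ : ℝ → X | ∀ s ∈ Icc (0:ℝ) 1, ∀ t ∈ Icc (0:ℝ) 1,
        dist (γ s) (γ t) = |s - t| * dist (γ 0) (γ 1)} := by
      have he : {γ : ℝ → X | ∀ s ∈ Icc (0:ℝ) 1, ∀ t ∈ Icc (0:ℝ) 1,
          dist (γ s) (γ t) = |s - t| * dist (γ 0) (γ 1)}
          = ⋂ s ∈ Icc (0:ℝ) 1, ⋂ t ∈ Icc (0:ℝ) 1,
            {γ : ℝ → X | dist (γ s) (γ t) = |s - t| * dist (γ 0) (γ 1)} := by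
        ext γ; simp only [mem_iInter, mem_setOf_eq, mem_Icc]
      rw [he]
      refine isClosed_biInter fun s hs => isClosed_biInter fun t ht => ?_
      exact isClosed_eq ((continuous_apply s).dist (continuous_apply t))
        (continuous_const.mul ((continuous_apply (0:ℝ)).dist (continuous_apply (1:ℝ))))
    have h2 : IsClosed {γ : ℝ → X | γ 0 = x₀} :=
      isClosed_eq (continuous_apply (0:ℝ)) continuous_const
    have h3 : IsClosed {γ : ℝ → X | ∀ t ∈ Icc (0:ℝ) 1, η ≤ Metric.infDist (γ t) Y} := by
      have he : {γ : ℝ → X | ∀ t ∈ Icc (0:ℝ) 1, η ≤ Metric.infDist (γ t) Y}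
          = ⋂ t ∈ Icc (0:ℝ) 1, {γ : ℝ → X | η ≤ Metric.infDist (γ t) Y} := by
        ext γ; simp [mem_iInter]
      rw [he]
      refine isClosed_biInter fun t ht => ?_
      exact isClosed_le continuous_const
        ((Metric.continuous_infDist_pt Y).comp (continuous_apply t))
    have he : S η = {γ : ℝ → X | ∀ s ∈ Icc (0:ℝ) 1, ∀ t ∈ Icc (0:ℝ) 1,
        dist (γ s) (γ t) = |s - t| * dist (γ 0) (γ 1)} ∩
        ({γ : ℝ → X | γ 0 = x₀} ∩
         {γ : ℝ → X | ∀ t ∈ Icc (0:ℝ) 1, η ≤ Metric.infDist (γ t) Y}) := by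
      ext γ; simp [hSdef, mem_setOf_eq, and_assoc]
    rw [he]
    exact h1.inter (h2.inter h3)
  have hFclosed : ∀ η : ℝ, IsClosed ((fun γ : ℝ → X => γ 1) '' S η) := fun η =>
    (((hSclosed η).isCompact).image (continuous_apply (1:ℝ))).isClosed
  -- B is the complement of the union of the images
  have hBeq : B = (⋃ n : ℕ, (fun γ : ℝ → X => γ 1) '' S (1 / (n + 1)))ᶜ := by
    ext y
    constructor
    · intro hy
      simp only [mem_compl_iff, mem_iUnion, not_exists]
      intro n hmem
      obtain ⟨γ, hγS, hγ1⟩ := hmem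
      obtain ⟨hgeodγ, hγ0, hfar⟩ := hγS
      obtain ⟨t, htI, htY⟩ := hy γ hgeodγ hγ0 hγ1
      have h0 : Metric.infDist (γ t) Y = 0 := Metric.infDist_zero_of_mem htY
      have h1 : (0:ℝ) < 1 / (n + 1) := by positivity
      have := hfar t htI
      rw [h0] at this
      linarith
    · intro hy
      intro γ hgeodγ hγ0 hγ1
      by_contra hno
      push_neg at hno
      -- γ avoids Y on [0,1]
      have havoid : ∀ t ∈ Icc (0:ℝ) 1, γ t ∉ Y := hno
      -- γ is continuous on [0,1]
      have hcont : ContinuousOn γ (Icc (0:ℝ) 1) := by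
        have hlip : LipschitzOnWith (Real.toNNReal (dist (γ 0) (γ 1))) γ (Icc (0:ℝ) 1) := by
          apply LipschitzOnWith.of_dist_le_mul
          intro u hu v hv
          rw [hgeodγ u hu v hv, Real.dist_eq]
          calc |u - v| * dist (γ 0) (γ 1)
              ≤ |u - v| * (Real.toNNReal (dist (γ 0) (γ 1)) : ℝ) := by
                exact mul_le_mul_of_nonneg_left (Real.le_coe_toNNReal _) (abs_nonneg _)
            _ = (Real.toNNReal (dist (γ 0) (γ 1)) : ℝ) * |u - v| := by ring
        exact hlip.continuousOn
      have hc2 : ContinuousOn (fun t => Metric.infDist (γ t) Y) (Icc (0:ℝ) 1) :=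
        (Metric.continuous_infDist_pt Y).comp_continuousOn hcont
      obtain ⟨t₀, ht₀I, hmin⟩ := isCompact_Icc.exists_isMinOn
        (nonempty_Icc.mpr zero_le_one) hc2
      have hminpos : 0 < Metric.infDist (γ t₀) Y :=
        (hY.notMem_iff_infDist_pos hYne).mp (havoid t₀ ht₀I)
      obtain ⟨n, hn⟩ := exists_nat_one_div_lt hminpos
      have hγS : γ ∈ S (1 / (n + 1)) := by
        refine ⟨hgeodγ, hγ0, fun t htI => ?_⟩
        have := hmin htI
        simp only at this
        calc (1:ℝ) / (n + 1) ≤ Metric.infDist (γ t₀) Y := hn.le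
          _ ≤ Metric.infDist (γ t) Y := this
      exact hy (mem_iUnion.mpr ⟨n, ⟨γ, hγS, hγ1⟩⟩)
  have hBmeas : MeasurableSet B := by
    rw [hBeq]
    exact (MeasurableSet.iUnion fun n => (hFclosed _).measurableSet).compl
  -- main argument
  by_contra hmB
  have hBpos : 0 < m B := pos_iff_ne_zero.mpr hmB
  obtain ⟨Pl, hPlprob, hPl0, hPl1, hPlt⟩ := hMCP x₀ B hBmeas hBpos
  have hmeas_e : ∀ t : ℝ, Measurable (fun γ : {γ : ℝ → X // ∀ s ∈ Icc (0:ℝ) 1,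
      ∀ t ∈ Icc (0:ℝ) 1, dist (γ s) (γ t) = |s - t| * dist (γ 0) (γ 1)} => γ.1 t) :=
    fun t => (measurable_pi_apply t).comp measurable_subtype_coe
  have hae0 : ∀ᵐ γ ∂Pl, γ.1 0 = x₀ := by
    have hs : MeasurableSet ({x₀}ᶜ : Set X) := (measurableSet_singleton x₀).compl
    have h0 : Pl ((fun γ => γ.1 0) ⁻¹' ({x₀}ᶜ : Set X)) = 0 := by
      rw [← Measure.map_apply (hmeas_e 0) hs, hPl0, Measure.dirac_apply' _ hs]
      simp
    rw [ae_iff]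
    refine measure_mono_null (fun γ hγ => ?_) h0
    simpa using hγ
  have hae1 : ∀ᵐ γ ∂Pl, γ.1 1 ∈ B := by
    have h0 : Pl ((fun γ => γ.1 1) ⁻¹' Bᶜ) = 0 := by
      rw [← Measure.map_apply (hmeas_e 1) hBmeas.compl, hPl1]
      rw [Measure.smul_apply, Measure.restrict_apply hBmeas.compl]
      simp
    rw [ae_iff]
    refine measure_mono_null (fun γ hγ => ?_) h0
    simpa using hγ
  -- constants
  set D := Metric.diam (univ : Set X) with hD
  have hDbound : ∀ x y : X, dist x y ≤ D := fun x y =>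
    Metric.dist_le_diam_of_mem isCompact_univ.isBounded (mem_univ x) (mem_univ y)
  have hδpos : 0 < Metric.infDist x₀ Y := (hY.notMem_iff_infDist_pos hYne).mp hx₀
  set δ := Metric.infDist x₀ Y with hδ
  have hδD : δ ≤ D := le_trans (Metric.infDist_le_dist_of_mem hy₀) (hDbound x₀ y₀)
  have hDpos : 0 < D := lt_of_lt_of_le hδpos hδD
  set a := δ / (2 * D) with ha
  have hapos : 0 < a := by positivity
  have hahalf : a ≤ 1 / 2 := by
    rw [ha, div_le_div_iff₀ (by positivity) (by norm_num)]
    linarith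
  have ha1 : a ≤ 1 := by linarith
  have haN : 0 < a ^ N := Real.rpow_pos_of_pos hapos N
  -- key estimate for every small ε
  have key : ∀ ε : ℝ, 0 < ε → ε ≤ 1 → 2 * ε < ε₀ →
      m B ≤ ENNReal.ofReal ((D + 3) * (C / a ^ N) * (4 * max A' 1) * ε) := by
    intro ε hε hε1 hεε₀
    set h := ε / D with hh
    have hhpos : 0 < h := by positivity
    set K := ⌈(1 - a) / h⌉₊ with hK
    set T : ℕ → ℝ := fun i => min (a + i * h) 1 with hT
    have hTa : ∀ i : ℕ, a ≤ T i := by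
      intro i
      refine le_min ?_ ha1
      have : (0:ℝ) ≤ (i : ℝ) * h := by positivity
      linarith
    have hTmem : ∀ i : ℕ, T i ∈ Ioc (0:ℝ) 1 := fun i =>
      ⟨lt_of_lt_of_le hapos (hTa i), min_le_right _ _⟩
    -- every geodesic from x₀ to B passes 2ε-close to Y at some grid time
    have hhit : ∀ γ : {γ : ℝ → X // ∀ s ∈ Icc (0:ℝ) 1, ∀ t ∈ Icc (0:ℝ) 1,
        dist (γ s) (γ t) = |s - t| * dist (γ 0) (γ 1)},
        γ.1 0 = x₀ → γ.1 1 ∈ B →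
        ∃ i ∈ Finset.range (K + 1), γ.1 (T i) ∈ Metric.thickening (2 * ε) Y := by
      intro γ h0 h1
      obtain ⟨tstar, htsI, htsY⟩ := h1 γ.1 γ.2 h0 rfl
      set d := dist (γ.1 0) (γ.1 1) with hd
      have hdD : d ≤ D := hDbound _ _
      have hdist0 : dist (γ.1 0) (γ.1 tstar) = tstar * d := by
        rw [γ.2 0 (left_mem_Icc.mpr zero_le_one) tstar htsI]
        rw [abs_of_nonpos (by linarith [htsI.1])]
        ring_nf
        rw [hd]
      have hδle : δ ≤ tstar * d := by
        rw [← hdist0, hδ]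
        have h2x := Metric.infDist_le_dist_of_mem (x := x₀) htsY
        rw [h0]
        exact h2x
      have hdpos : 0 < d := by
        by_contra hdle
        push_neg at hdle
        nlinarith [htsI.1, htsI.2]
      have htsa : a ≤ tstar := by
        rw [ha, div_le_iff₀ (by positivity)]
        nlinarith [htsI.1, htsI.2]
      set i := ⌈(tstar - a) / h⌉₊ with hi
      have hiK : i ∈ Finset.range (K + 1) := by
        simp only [Finset.mem_range, Nat.lt_succ_iff, hi, hK]
        exact Nat.ceil_le_ceil ((div_le_div_iff_of_pos_right hhpos).mpr (by linarith [htsI.2]))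
      have hge : tstar ≤ a + i * h := by
        have h1' := Nat.le_ceil ((tstar - a) / h)
        rw [div_le_iff₀ hhpos] at h1'
        linarith
      have hlt : a + i * h < tstar + h := by
        have h0' : (0:ℝ) ≤ (tstar - a) / h := div_nonneg (by linarith) hhpos.le
        have h1' := Nat.ceil_lt_add_one h0'
        have h2' : (i:ℝ) * h < ((tstar - a) / h + 1) * h := by
          exact mul_lt_mul_of_pos_right h1' hhpos
        rw [add_mul, div_mul_cancel₀ _ hhpos.ne', one_mul] at h2'
        linarith
      have hTclose : |T i - tstar| < h := by
        rcases le_or_gt (a + i * h) 1 with hc | hc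
        · have hTi : T i = a + i * h := min_eq_left hc
          rw [hTi, abs_of_nonneg (by linarith)]
          linarith
        · have hTi : T i = 1 := min_eq_right hc.le
          rw [hTi, abs_of_nonneg (by linarith [htsI.2])]
          linarith [htsI.2]
      have hTIcc : T i ∈ Icc (0:ℝ) 1 := ⟨(hTmem i).1.le, (hTmem i).2⟩
      have hdistT : dist (γ.1 (T i)) (γ.1 tstar) < ε := by
        rw [γ.2 (T i) hTIcc tstar htsI]
        calc |T i - tstar| * d ≤ |T i - tstar| * D :=
              mul_le_mul_of_nonneg_left hdD (abs_nonneg _)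
          _ < h * D := mul_lt_mul_of_pos_right hTclose hDpos
          _ = ε := by rw [hh, div_mul_cancel₀ _ hDpos.ne']
      exact ⟨i, hiK, Metric.mem_thickening_iff.mpr
        ⟨γ.1 tstar, htsY, by linarith⟩⟩
    -- union bound
    set Th := Metric.thickening (2 * ε) Y with hTh
    have hThmeas : MeasurableSet Th := Metric.isOpen_thickening.measurableSet
    set U := ⋃ i ∈ Finset.range (K + 1), (fun γ : {γ : ℝ → X // ∀ s ∈ Icc (0:ℝ) 1,
        ∀ t ∈ Icc (0:ℝ) 1, dist (γ s) (γ t) = |s - t| * dist (γ 0) (γ 1)} =>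
        γ.1 (T i)) ⁻¹' Th with hU
    have haeU : ∀ᵐ γ ∂Pl, γ ∈ U := by
      filter_upwards [hae0, hae1] with γ h0 h1
      obtain ⟨i, hi, hmem⟩ := hhit γ h0 h1
      exact mem_iUnion₂.mpr ⟨i, hi, hmem⟩
    have hUc : Pl Uᶜ = 0 := by
      rw [ae_iff] at haeU
      exact haeU
    have hone : (1 : ENNReal) ≤ ∑ i ∈ Finset.range (K + 1),
        Pl ((fun γ : {γ : ℝ → X // ∀ s ∈ Icc (0:ℝ) 1, ∀ t ∈ Icc (0:ℝ) 1,
          dist (γ s) (γ t) = |s - t| * dist (γ 0) (γ 1)} => γ.1 (T i)) ⁻¹' Th) := by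
      calc (1 : ENNReal) = Pl univ := hPlprob.measure_univ.symm
        _ = Pl (U ∪ Uᶜ) := by rw [union_compl_self]
        _ ≤ Pl U + Pl Uᶜ := measure_union_le _ _
        _ = Pl U := by rw [hUc, add_zero]
        _ ≤ _ := measure_biUnion_finset_le _ _
    -- bound each term
    have hterm : ∀ i : ℕ,
        Pl ((fun γ : {γ : ℝ → X // ∀ s ∈ Icc (0:ℝ) 1, ∀ t ∈ Icc (0:ℝ) 1,
          dist (γ s) (γ t) = |s - t| * dist (γ 0) (γ 1)} => γ.1 (T i)) ⁻¹' Th) ≤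
        ENNReal.ofReal (C / a ^ N) * (m B)⁻¹ *
          ENNReal.ofReal (max A' 1 * (2 * ε) ^ 2) := by
      intro i
      have h1 : Pl ((fun γ : {γ : ℝ → X // ∀ s ∈ Icc (0:ℝ) 1, ∀ t ∈ Icc (0:ℝ) 1,
          dist (γ s) (γ t) = |s - t| * dist (γ 0) (γ 1)} => γ.1 (T i)) ⁻¹' Th)
          = Measure.map (fun γ => γ.1 (T i)) Pl Th :=
        (Measure.map_apply (hmeas_e (T i)) hThmeas).symm
      have h2 := Measure.le_iff'.mp (hPlt (T i) (hTmem i)) Th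
      rw [Measure.smul_apply, smul_eq_mul] at h2
      have h4 : m Th ≤ ENNReal.ofReal (max A' 1 * (2 * ε) ^ 2) := by
        calc m Th ≤ ENNReal.ofReal (A' * (2 * ε) ^ 2) :=
              hthick (2 * ε) (by linarith) hεε₀
          _ ≤ _ := ENNReal.ofReal_le_ofReal
              (mul_le_mul_of_nonneg_right (le_max_left A' 1) (by positivity))
      have h5 : ENNReal.ofReal (C / T i ^ N) ≤ ENNReal.ofReal (C / a ^ N) := by
        apply ENNReal.ofReal_le_ofReal
        apply div_le_div_of_nonneg_left hC.le haN
        exact Real.rpow_le_rpow hapos.le (hTa i) (by linarith)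
      calc Pl _ = Measure.map (fun γ => γ.1 (T i)) Pl Th := h1
        _ ≤ ENNReal.ofReal (C / T i ^ N) * (m B)⁻¹ * m Th := h2
        _ ≤ ENNReal.ofReal (C / a ^ N) * (m B)⁻¹ *
            ENNReal.ofReal (max A' 1 * (2 * ε) ^ 2) := by
          exact mul_le_mul' (mul_le_mul' h5 le_rfl) h4
    -- combine
    have hsum : (1 : ENNReal) ≤ (K + 1 : ℕ) •
        (ENNReal.ofReal (C / a ^ N) * (m B)⁻¹ *
          ENNReal.ofReal (max A' 1 * (2 * ε) ^ 2)) := by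
      refine le_trans hone ?_
      have := Finset.sum_le_card_nsmul (Finset.range (K + 1)) _ _
        (fun i _ => hterm i)
      simpa using this
    rw [nsmul_eq_mul] at hsum
    -- bound the cardinality
    have hKle : ((K : ℝ) + 1) ≤ (D + 3) / ε := by
      have h0' : (0:ℝ) ≤ (1 - a) / h := div_nonneg (by linarith) hhpos.le
      have h1' := Nat.ceil_lt_add_one h0'
      have h2' : (1 - a) / h ≤ 1 / h := by
        apply div_le_div_of_nonneg_right (by linarith) hhpos.le
      have h3' : (1:ℝ) / h = D / ε := by
        rw [hh]; field_simp
      have h4' : (3:ℝ) ≤ 3 / ε := by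
        rw [le_div_iff₀ hε]; nlinarith
      have h5' : ((K:ℝ)) < (1 - a) / h + 1 := h1'
      have hlt' : ((K : ℝ) + 1) < (D + 3) / ε := by
        calc ((K : ℝ) + 1) < (1 - a) / h + 2 := by linarith
          _ ≤ 1 / h + 2 := by linarith
          _ = D / ε + 2 := by rw [h3']
          _ ≤ D / ε + 3 / ε := by linarith
          _ = (D + 3) / ε := by ring
      exact hlt'.le
    have hcast : ((K + 1 : ℕ) : ENNReal) ≤ ENNReal.ofReal ((D + 3) / ε) := by
      have : ((K + 1 : ℕ) : ENNReal) = ENNReal.ofReal ((K : ℝ) + 1) := by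
        rw [← ENNReal.ofReal_natCast (K + 1)]
        norm_num
      rw [this]
      exact ENNReal.ofReal_le_ofReal hKle
    have hfinal : (1 : ENNReal) ≤
        ENNReal.ofReal ((D + 3) * (C / a ^ N) * (4 * max A' 1) * ε) * (m B)⁻¹ := by
      refine le_trans hsum ?_
      have heq : ENNReal.ofReal ((D + 3) / ε) * (ENNReal.ofReal (C / a ^ N) *
          ENNReal.ofReal (max A' 1 * (2 * ε) ^ 2)) =
          ENNReal.ofReal ((D + 3) * (C / a ^ N) * (4 * max A' 1) * ε) := by
        rw [← ENNReal.ofReal_mul (by positivity), ← ENNReal.ofReal_mul (by positivity)]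
        congr 1
        have hmax : (0:ℝ) ≤ max A' 1 := le_trans zero_le_one (le_max_right A' 1)
        field_simp
        ring
      calc (K + 1 : ℕ) * (ENNReal.ofReal (C / a ^ N) * (m B)⁻¹ *
            ENNReal.ofReal (max A' 1 * (2 * ε) ^ 2))
          ≤ ENNReal.ofReal ((D + 3) / ε) * (ENNReal.ofReal (C / a ^ N) * (m B)⁻¹ *
            ENNReal.ofReal (max A' 1 * (2 * ε) ^ 2)) := by
            exact mul_le_mul' hcast le_rfl
        _ = ENNReal.ofReal ((D + 3) / ε) * (ENNReal.ofReal (C / a ^ N) *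
            ENNReal.ofReal (max A' 1 * (2 * ε) ^ 2)) * (m B)⁻¹ := by ring
        _ = ENNReal.ofReal ((D + 3) * (C / a ^ N) * (4 * max A' 1) * ε) * (m B)⁻¹ := by
            rw [heq]
    have := mul_le_mul_left hfinal (m B)
    rwa [one_mul, mul_assoc, ENNReal.inv_mul_cancel hmB (measure_ne_top m B),
      mul_one] at this
  -- choose ε small enough to contradict m B > 0
  set c := (D + 3) * (C / a ^ N) * (4 * max A' 1) with hc
  have hcpos : 0 < c := by
    have hmax : (0:ℝ) < max A' 1 := lt_of_lt_of_le zero_lt_one (le_max_right A' 1)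
    have : 0 < C / a ^ N := div_pos hC haN
    positivity
  set r := (m B).toReal with hr
  have hrpos : 0 < r := ENNReal.toReal_pos hmB (measure_ne_top m B)
  set ε := min (min (ε₀ / 4) 1) (r / (2 * c)) with hε
  have hεpos : 0 < ε := lt_min (lt_min (by linarith) one_pos) (by positivity)
  have hε1 : ε ≤ 1 := le_trans (min_le_left _ _) (min_le_right _ _)
  have hε2 : 2 * ε < ε₀ := by
    have : ε ≤ ε₀ / 4 := le_trans (min_le_left _ _) (min_le_left _ _)
    linarith
  have hkey := key ε hεpos hε1 hε2
  have hlt : c * ε < r := by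
    have h1' : ε ≤ r / (2 * c) := min_le_right _ _
    have h2' : c * ε ≤ c * (r / (2 * c)) := mul_le_mul_of_nonneg_left h1' hcpos.le
    have h3' : c * (r / (2 * c)) = r / 2 := by field_simp
    rw [h3'] at h2'
    linarith
  have hcontr : m B < m B := by
    refine lt_of_le_of_lt hkey ?_
    rw [ENNReal.ofReal_lt_iff_lt_toReal (mul_nonneg hcpos.le hεpos.le) (measure_ne_top m B)]
    exact hlt
  exact absurd hcontr (lt_irrefl _)
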